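/- Let P be a directed partially ordered set with calibre (κ⁺, κ), and let {C_p : p ∈ P} be a P-ordered collection of families of sets, each of which is additively <κ-Noetherian. Then the union ⋃_{p∈P} C_p is additively ≤κ-Noetherian (i.e., additively <κ⁺-Noetherian). -/

import Mathlib

universe u

/-- A family of sets is `<κ`-Noetherian if every subfamily well-ordered by
strict inclusion has cardinality `< κ`. -/
def IsLtNoetherian {X : Type u} (C : Set (Set X)) (κ : Cardinal.{u}) : Prop :=
  ∀ D : Set (Set X), D ⊆ C →
    IsWellOrder D (fun A B => (A : Set X) ⊂ (B : Set X)) → Cardinal.mk D < κ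

/-- A family is additively `<κ`-Noetherian if the collection of all unions of
its subfamilies is `<κ`-Noetherian. -/
def IsAddLtNoetherian {X : Type u} (C : Set (Set X)) (κ : Cardinal.{u}) : Prop :=
  IsLtNoetherian {U : Set X | ∃ S : Set (Set X), S ⊆ C ∧ U = ⋃₀ S} κ

theorem stmt5 {P : Type u} [PartialOrder P] [IsDirected P (· ≤ ·)] {X : Type u}
    (κ : Cardinal.{u}) (hκ : Cardinal.aleph0 ≤ κ)
    (hcal : ∀ A : Set P, Cardinal.mk A = Order.succ κ →
      ∃ A₀ ⊆ A, Cardinal.mk A₀ = κ ∧ BddAbove A₀)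
    (C : P → Set (Set X)) (hmono : Monotone C)
    (hnoeth : ∀ p, IsAddLtNoetherian (C p) κ) :
    IsAddLtNoetherian (⋃ p, C p) (Order.succ κ) := by
  intro D hD hwo
  haveI := hwo
  by_contra hlt
  rw [not_lt] at hlt
  set r : ↥D → ↥D → Prop := fun A B => (A : Set X) ⊂ (B : Set X) with hrdef
  have hle : (Order.succ κ).ord ≤ Ordinal.type r :=
    Cardinal.ord_le.mpr (by rw [Ordinal.card_type]; exact hlt)
  have hκ' : Cardinal.aleph0 ≤ Order.succ κ := hκ.trans (Order.le_succ κ)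
  have hlim : Order.IsSuccLimit ((Order.succ κ).ord) := Cardinal.isSuccLimit_ord hκ'
  set lam : Ordinal := (Order.succ κ).ord with hlamdef
  have hmkT : Cardinal.mk lam.ToType = Order.succ κ := by
    rw [Cardinal.mk_toType, hlamdef, Cardinal.card_ord]
  haveI : IsWellOrder lam.ToType (· < ·) := isWellOrder_lt
  set π : lam.ToType → Ordinal := fun t => Ordinal.typein (α := lam.ToType) (· < ·) t with hπdef
  have hπlt : ∀ t : lam.ToType, π t < lam := fun t => Ordinal.typein_lt_self t
  -- the chain
  set F : Ordinal → Set X := fun i =>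
    if h : i < Ordinal.type r then ((Ordinal.enum r ⟨i, h⟩ : ↥D) : Set X) else ∅ with hFdef
  have hFD : ∀ i, i < lam → F i ∈ D := by
    intro i hi
    have h' : i < Ordinal.type r := hi.trans_le hle
    simp only [hFdef, dif_pos h']
    exact (Ordinal.enum r ⟨i, h'⟩).2
  have hFlt : ∀ i j, i < j → j < lam → F i ⊂ F j := by
    intro i j hij hj
    have hj' : j < Ordinal.type r := hj.trans_le hle
    have hi' : i < Ordinal.type r := hij.trans hj'
    simp only [hFdef, dif_pos hi', dif_pos hj']
    exact (Ordinal.enum_lt_enum (r := r) (o₁ := ⟨i, hi'⟩) (o₂ := ⟨j, hj'⟩)).mpr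
      (Subtype.mk_lt_mk.mpr hij)
  have hFle : ∀ i j, i ≤ j → j < lam → F i ⊆ F j := by
    intro i j hij hj
    rcases hij.lt_or_eq with h | h
    · exact (hFlt i j h hj).subset
    · rw [h]
  -- choose points
  have hx : ∀ t : lam.ToType, ∃ x, x ∈ F (Order.succ (π t)) ∧ x ∉ F (π t) := by
    intro t
    exact Set.exists_of_ssubset (hFlt _ _ (Order.lt_succ _) (hlim.succ_lt (hπlt t)))
  choose x hx1 hx2 using hx
  -- choose covering sets
  have hS : ∀ t : lam.ToType, ∃ V, V ∈ (⋃ p, C p) ∧ x t ∈ V ∧ V ⊆ F (Order.succ (π t)) := by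
    intro t
    obtain ⟨S, hS1, hS2⟩ := hD (hFD _ (hlim.succ_lt (hπlt t)))
    have hxS : x t ∈ ⋃₀ S := hS2 ▸ hx1 t
    obtain ⟨V, hV, hxV⟩ := hxS
    exact ⟨V, hS1 hV, hxV, fun y hy => hS2 ▸ Set.subset_sUnion_of_mem hV hy⟩
  choose V hVmem hxV hVsub using hS
  have hp : ∀ t, ∃ p, V t ∈ C p := by intro t; simpa using hVmem t
  choose g hg using hp
  -- find a κ-sized set of indices with bounded `g`
  have hIq : ∃ (I : Set lam.ToType) (q : P), κ ≤ Cardinal.mk I ∧ ∀ t ∈ I, g t ≤ q := by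
    by_cases hbig : Order.succ κ ≤ Cardinal.mk (Set.range g)
    · obtain ⟨A, hAsub, hAmk⟩ := Cardinal.le_mk_iff_exists_subset.mp hbig
      obtain ⟨A₀, hA₀sub, hA₀mk, q, hq⟩ := hcal A hAmk
      have hch : ∀ a : ↥A₀, ∃ t, g t = (a : P) := fun a => hAsub (hA₀sub a.2)
      choose τ hτ using hch
      have hinj : Function.Injective τ := by
        intro a b hab
        exact Subtype.ext (by rw [← hτ a, ← hτ b, hab])
      refine ⟨Set.range τ, q, ?_, ?_⟩
      · rw [Cardinal.mk_range_eq _ hinj, hA₀mk]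
      · rintro t ⟨a, rfl⟩
        rw [hτ a]
        exact hq a.2
    · rw [not_le, Order.lt_succ_iff] at hbig
      have hfib : ∃ a : ↥(Set.range g), κ ≤ Cardinal.mk {t | g t = (a : P)} := by
        by_contra hcon
        push_neg at hcon
        have hcov : (Set.univ : Set lam.ToType) = ⋃ a : ↥(Set.range g), {t | g t = (a : P)} := by
          ext t
          simp only [Set.mem_univ, Set.mem_iUnion, Set.mem_setOf_eq, true_iff]
          exact ⟨⟨g t, t, rfl⟩, rfl⟩
        have h1 : Cardinal.mk lam.ToType ≤
            Cardinal.mk (Set.range g) * ⨆ a : ↥(Set.range g), Cardinal.mk {t | g t = (a : P)} := by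
          calc Cardinal.mk lam.ToType = Cardinal.mk (Set.univ : Set lam.ToType) := (Cardinal.mk_univ).symm
            _ = Cardinal.mk (⋃ a : ↥(Set.range g), {t | g t = (a : P)}) := by rw [hcov]
            _ ≤ _ := Cardinal.mk_iUnion_le _
        have h2 : (⨆ a : ↥(Set.range g), Cardinal.mk {t | g t = (a : P)}) ≤ κ :=
          ciSup_le' fun a => (hcon a).le
        have h3 : Cardinal.mk lam.ToType ≤ κ * κ := h1.trans (mul_le_mul' hbig h2)
        rw [Cardinal.mul_eq_self hκ, hmkT] at h3
        exact absurd h3 (not_le.mpr (Order.lt_succ κ))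
      obtain ⟨a, ha⟩ := hfib
      exact ⟨{t | g t = (a : P)}, (a : P), ha, fun t ht => le_of_eq ht⟩
  obtain ⟨I, q, hImk, hIle⟩ := hIq
  -- the new chain inside `C q`
  set W : lam.ToType → Set X := fun t => ⋃₀ (V '' {s | s ∈ I ∧ s ≤ t}) with hWdef
  have hWmem : ∀ t, W t ∈ {U : Set X | ∃ S : Set (Set X), S ⊆ C q ∧ U = ⋃₀ S} := by
    intro t
    refine ⟨V '' {s | s ∈ I ∧ s ≤ t}, ?_, rfl⟩
    rintro _ ⟨s, ⟨hs, _⟩, rfl⟩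
    exact hmono (hIle s hs) (hg s)
  have hWlt : ∀ s ∈ I, ∀ t ∈ I, s < t → W s ⊂ W t := by
    intro s hs t ht hst
    have hsub : W s ⊆ W t :=
      Set.sUnion_subset_sUnion (Set.image_mono (by exact fun u hu => ⟨hu.1, hu.2.trans hst.le⟩))
    rw [Set.ssubset_iff_of_subset hsub]
    refine ⟨x t, Set.subset_sUnion_of_mem
      (Set.mem_image_of_mem V (show t ∈ {s | s ∈ I ∧ s ≤ t} from ⟨ht, le_refl t⟩)) (hxV t), ?_⟩
    intro hxs
    obtain ⟨_, ⟨u, ⟨hu, hus⟩, rfl⟩, hxu⟩ := hxs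
    have h1 : π u < π t := (Ordinal.typein_lt_typein (α := lam.ToType) (· < ·)).mpr (hus.trans_lt hst)
    have h2 : Order.succ (π u) ≤ π t := Order.succ_le_of_lt h1
    exact hx2 t (hFle _ _ h2 (hπlt t) (hVsub u hxu))
  have hinj : Set.InjOn W I := by
    intro s hs t ht hst
    by_contra hne
    rcases lt_or_gt_of_ne hne with h | h
    · exact (hWlt s hs t ht h).ne hst
    · exact (hWlt t ht s hs h).ne hst.symm
  -- transfer the well-order
  have hwo' : IsWellOrder ↥(W '' I) (fun A B => (A : Set X) ⊂ (B : Set X)) := by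
    have hb : Function.Bijective (fun s : ↥I => (⟨W s.1, s.1, s.2, rfl⟩ : ↥(W '' I))) := by
      constructor
      · intro a b hab
        exact Subtype.ext (hinj a.2 b.2 (congrArg Subtype.val hab))
      · rintro ⟨u, t, ht, rfl⟩
        exact ⟨⟨t, ht⟩, rfl⟩
    have e : @RelIso ↥I ↥(W '' I) (Subrel (· < ·) (· ∈ I))
        (fun A B => (A : Set X) ⊂ (B : Set X)) := by
      refine ⟨Equiv.ofBijective _ hb, ?_⟩
      intro a b
      simp only [Equiv.ofBijective_apply]
      constructor
      · intro h
        by_contra hab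
        rcases (not_lt.mp hab).lt_or_eq with h' | h'
        · exact ssubset_irrefl _ (h.trans (hWlt b.1 b.2 a.1 a.2 h'))
        · have : W b.1 = W a.1 := congrArg W h'
          rw [this] at h
          exact ssubset_irrefl _ h
      · intro h
        exact hWlt a.1 a.2 b.1 b.2 h
    exact e.symm.toRelEmbedding.isWellOrder
  have hfin := hnoeth q (W '' I) (by rintro _ ⟨t, ht, rfl⟩; exact hWmem t) hwo'
  rw [Cardinal.mk_image_eq_of_injOn _ _ hinj] at hfin
  exact absurd hfin (not_lt.mpr hImk)
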